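/- Let I ⊆ ℝ₊ be a nonempty interval with inf(I·I^{-1}) > 0 and n ≥ 2. Then Γ_n(I) is star-shaped with respect to the origin ((0,0),(0,0)): for all t ∈ [0,1] and ((r,s),(p,q)) ∈ Γ_n(I), also ((tr,ts),(tp,tq)) ∈ Γ_n(I). -/

import Mathlib

open Real Finset Pointwise

noncomputable def gini (p q : ℝ) {n : ℕ} (x : Fin n → ℝ) : ℝ :=
  if p = q then Real.exp ((∑ i, x i ^ p * Real.log (x i)) / ∑ i, x i ^ p)
  else ((∑ i, x i ^ p) / ∑ i, x i ^ q) ^ (1 / (p - q))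
def Gamma (n : ℕ) (I : Set ℝ) : Set ((ℝ × ℝ) × (ℝ × ℝ)) :=
  {w | ∀ x : Fin n → ℝ, (∀ i, x i ∈ I) → gini w.1.1 w.1.2 x ≤ gini w.2.1 w.2.2 x}

lemma sum_rpow_pos {n : ℕ} (hn : 0 < n) (x : Fin n → ℝ) (hx : ∀ i, 0 < x i) (a : ℝ) :
    0 < ∑ i, x i ^ a := by
  have : Nonempty (Fin n) := Fin.pos_iff_nonempty.mp hn
  exact Finset.sum_pos (fun i _ => Real.rpow_pos_of_pos (hx i) a) Finset.univ_nonempty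

lemma gini_pos {n : ℕ} (hn : 0 < n) (p q : ℝ) (x : Fin n → ℝ) (hx : ∀ i, 0 < x i) :
    0 < gini p q x := by
  unfold gini
  split
  · exact Real.exp_pos _
  · exact Real.rpow_pos_of_pos (div_pos (sum_rpow_pos hn x hx p) (sum_rpow_pos hn x hx q)) _

lemma gini_scale {n : ℕ} (hn : 0 < n) (p q t c : ℝ) (ht : 0 < t) (hc : 0 < c)
    (x : Fin n → ℝ) (hx : ∀ i, 0 < x i) :
    gini (t * p) (t * q) x = (gini p q (fun i => c * x i ^ t) / c) ^ (1 / t) := by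
  have hy : ∀ i, ∀ a : ℝ, (c * x i ^ t) ^ a = c ^ a * x i ^ (t * a) := by
    intro i a
    rw [Real.mul_rpow hc.le (Real.rpow_pos_of_pos (hx i) t).le,
      Real.rpow_mul (hx i).le]
  by_cases hpq : p = q
  · subst hpq
    set A := ∑ i, x i ^ (t * p) * Real.log (x i) with hA
    set B := ∑ i, x i ^ (t * p) with hBdef
    have hB : (0:ℝ) < B := sum_rpow_pos hn x hx _
    have hcp : (0:ℝ) < c ^ p := Real.rpow_pos_of_pos hc p
    have hsum1 : ∑ i, (c * x i ^ t) ^ p = c ^ p * B := by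
      rw [hBdef, Finset.mul_sum]; exact Finset.sum_congr rfl fun i _ => hy i p
    have hsum2 : ∑ i, (c * x i ^ t) ^ p * Real.log (c * x i ^ t)
        = c ^ p * (Real.log c * B + t * A) := by
      calc ∑ i, (c * x i ^ t) ^ p * Real.log (c * x i ^ t)
          = ∑ i, (c ^ p * (Real.log c * x i ^ (t * p)) +
              c ^ p * (t * (x i ^ (t * p) * Real.log (x i)))) := by
            refine Finset.sum_congr rfl fun i _ => ?_
            rw [hy i p, Real.log_mul hc.ne' (Real.rpow_pos_of_pos (hx i) t).ne',
              Real.log_rpow (hx i)]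
            ring
        _ = c ^ p * (Real.log c * B + t * A) := by
            rw [Finset.sum_add_distrib, ← Finset.mul_sum, ← Finset.mul_sum,
              ← Finset.mul_sum, ← Finset.mul_sum, hBdef, hA, mul_add]
    have hL : gini (t * p) (t * p) x = Real.exp (A / B) := by simp [gini]; rfl
    have hg : gini p p (fun i => c * x i ^ t) = Real.exp (Real.log c + t * (A / B)) := by
      simp only [gini, if_pos rfl, ite_true]
      rw [hsum1, hsum2]
      congr 1
      field_simp
    rw [hL, hg, Real.exp_add, Real.exp_log hc, mul_div_cancel_left₀ _ hc.ne',
      ← Real.exp_mul]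
    congr 1
    field_simp
  · have htpq : t * p ≠ t * q := fun h => hpq (mul_left_cancel₀ ht.ne' h)
    simp only [gini, if_neg hpq, if_neg htpq]
    have hBp : (0:ℝ) < ∑ i, x i ^ (t * p) := sum_rpow_pos hn x hx _
    have hBq : (0:ℝ) < ∑ i, x i ^ (t * q) := sum_rpow_pos hn x hx _
    have hsp : ∑ i, (c * x i ^ t) ^ p = c ^ p * ∑ i, x i ^ (t * p) := by
      rw [Finset.mul_sum]; exact Finset.sum_congr rfl fun i _ => hy i p
    have hsq : ∑ i, (c * x i ^ t) ^ q = c ^ q * ∑ i, x i ^ (t * q) := by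
      rw [Finset.mul_sum]; exact Finset.sum_congr rfl fun i _ => hy i q
    rw [hsp, hsq]
    have hR : (0:ℝ) < (∑ i, x i ^ (t * p)) / ∑ i, x i ^ (t * q) := div_pos hBp hBq
    have hpq' : p - q ≠ 0 := sub_ne_zero.mpr hpq
    have key : c ^ p * (∑ i, x i ^ (t * p)) / (c ^ q * ∑ i, x i ^ (t * q))
        = c ^ (p - q) * ((∑ i, x i ^ (t * p)) / ∑ i, x i ^ (t * q)) := by
      rw [Real.rpow_sub hc]; field_simp
    rw [key, Real.mul_rpow (Real.rpow_pos_of_pos hc _).le hR.le,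
      ← Real.rpow_mul hc.le, mul_one_div, div_self hpq', Real.rpow_one,
      mul_comm c, mul_div_assoc, div_self hc.ne', mul_one,
      ← Real.rpow_mul hR.le]
    congr 1
    rw [show t * p - t * q = (p - q) * t by ring, one_div, one_div, one_div, mul_inv]

theorem Gamma_starshaped (I : Set ℝ) (hI : I.Nonempty) (hIpos : I ⊆ Set.Ioi 0)
    (hIint : I.OrdConnected) (h0 : 0 < sInf (I * I⁻¹)) (n : ℕ) (hn : 2 ≤ n)
    (t : ℝ) (ht : t ∈ Set.Icc (0 : ℝ) 1) (w : (ℝ × ℝ) × (ℝ × ℝ)) (hw : w ∈ Gamma n I) :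
    t • w ∈ Gamma n I := by
  obtain ⟨ht0, ht1⟩ := ht
  rcases eq_or_lt_of_le ht0 with h | htpos
  · rw [← h, zero_smul]
    intro x hx
    exact le_refl _
  · intro x hx
    have hxpos : ∀ i, 0 < x i := fun i => hIpos (hx i)
    have hn0 : 0 < n := lt_of_lt_of_le two_pos hn
    have hne : Nonempty (Fin n) := Fin.pos_iff_nonempty.mp hn0
    obtain ⟨i0, -, hmax⟩ := Finset.exists_max_image Finset.univ x Finset.univ_nonempty
    set M := x i0 with hM
    have hMpos : 0 < M := hxpos i0
    set c := M ^ (1 - t) with hcdef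
    have hc : 0 < c := Real.rpow_pos_of_pos hMpos _
    have hy_mem : ∀ i, (c * x i ^ t) ∈ I := by
      intro i
      have hxiM : x i ≤ M := hmax i (Finset.mem_univ i)
      have hupper : c * x i ^ t ≤ M := by
        calc c * x i ^ t ≤ c * M ^ t := by
              exact mul_le_mul_of_nonneg_left
                (Real.rpow_le_rpow (hxpos i).le hxiM ht0) hc.le
          _ = M := by
              rw [hcdef, ← Real.rpow_add hMpos, sub_add_cancel, Real.rpow_one]
      have hlower : x i ≤ c * x i ^ t := by
        have h1 : x i ^ (1 - t) ≤ c := by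
          rw [hcdef]
          exact Real.rpow_le_rpow (hxpos i).le hxiM (by linarith)
        calc x i = x i ^ (1 - t) * x i ^ t := by
              rw [← Real.rpow_add (hxpos i), sub_add_cancel, Real.rpow_one]
          _ ≤ c * x i ^ t :=
              mul_le_mul_of_nonneg_right h1 (Real.rpow_pos_of_pos (hxpos i) t).le
      exact hIint.out (hx i) (hx i0) ⟨hlower, hupper⟩
    have hcmp := hw (fun i => c * x i ^ t) hy_mem
    show gini (t • w).1.1 (t • w).1.2 x ≤ gini (t • w).2.1 (t • w).2.2 x
    simp only [Prod.smul_fst, Prod.smul_snd, smul_eq_mul]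
    rw [gini_scale hn0 w.1.1 w.1.2 t c htpos hc x hxpos,
      gini_scale hn0 w.2.1 w.2.2 t c htpos hc x hxpos]
    refine Real.rpow_le_rpow ?_ ?_ (by positivity)
    · exact div_nonneg (gini_pos hn0 _ _ _ (fun i => mul_pos hc (Real.rpow_pos_of_pos (hxpos i) t))).le hc.le
    · gcongr
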